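/- Let λ be a partition with at most m parts and λ_1 < n. Then the super Schur polynomial satisfies the stability property: Σ_{w ∈ S_m × S_n} ε(w) w( SP_λ(x; y_1,...,y_n) x_1^{m-1}⋯x_m^0 y_1^{n-1}⋯y_n^0 ) = Σ_{w ∈ S_m × S_n} ε(w) w( SP_λ(x; y_1,...,y_{n-1}) x_1^{m-1}⋯x_m^0 y_1^{n-1}⋯y_n^0 ). -/

import Mathlib

/-- Complete homogeneous symmetric polynomial, `0` for negative degree. -/
noncomputable def completeHom {R : Type*} [CommRing R] {m : ℕ} (x : Fin m → R) (k : ℤ) : R :=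
  if 0 ≤ k then ∑ c ∈ Finset.Nat.antidiagonalTuple m k.toNat, ∏ i, x i ^ c i else 0

/-- Elementary symmetric polynomial, `0` outside `0 ≤ k ≤ n`. -/
noncomputable def elemSym {R : Type*} [CommRing R] {n : ℕ} (y : Fin n → R) (k : ℤ) : R :=
  if 0 ≤ k then
    ∑ s ∈ (Finset.univ : Finset (Fin n)).powersetCard k.toNat, ∏ j ∈ s, y j
  else 0

/-- The super complete symmetric polynomial `h_a(x,y)`:
`h_a(x,y) = Σ_{j=0}^n (-1)^j h_{a-j}(x) e_j(y)`. -/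
noncomputable def superComplete {R : Type*} [CommRing R] {m n : ℕ} (x : Fin m → R)
    (y : Fin n → R) (a : ℤ) : R :=
  ∑ j ∈ Finset.range (n + 1), (-1 : R) ^ j * completeHom x (a - (j : ℤ)) * elemSym y (j : ℤ)

/-- The super Schur polynomial `SP_λ(x,y)` via the Jacobi–Trudy determinant
`det (h_{λ_i - i + j}(x,y))`. -/
noncomputable def superSchur {R : Type*} [CommRing R] {m n L : ℕ} (x : Fin m → R)
    (y : Fin n → R) (lam : Fin L → ℕ) : R :=
  Matrix.det (Matrix.of fun i j : Fin L =>
    superComplete x y ((lam i : ℤ) + (j : ℤ) - (i : ℤ)))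

section Aux

open Finset Polynomial

variable {R : Type*} [CommRing R]

/-- `elemSym` as a coefficient of `∏ (1 + y_i X)`. -/
lemma elemSym_eq_coeff {n : ℕ} (y : Fin n → R) (k : ℕ) :
    elemSym y (k : ℤ) = (∏ i, (1 + Polynomial.C (y i) * Polynomial.X)).coeff k := by
  have h : ∀ i : Fin n, (1 : R[X]) + Polynomial.C (y i) * Polynomial.X
      = Polynomial.C (y i) * Polynomial.X + 1 := fun i => by ring
  have hterm : ∀ t : Finset (Fin n),
      (∏ i ∈ t, (Polynomial.C (y i) * Polynomial.X))
        = Polynomial.C (∏ i ∈ t, y i) * Polynomial.X ^ t.card := by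
    intro t
    rw [Finset.prod_mul_distrib, Finset.prod_const, map_prod]
  rw [elemSym, if_pos (by positivity), Finset.prod_congr rfl (fun i _ => h i),
    Finset.prod_add]
  simp only [Finset.prod_const_one, mul_one, hterm]
  rw [Polynomial.finset_sum_coeff]
  simp only [Polynomial.coeff_C_mul, Polynomial.coeff_X_pow]
  rw [Finset.powersetCard_eq_filter, Finset.sum_filter]
  simp only [Int.toNat_natCast]
  refine Finset.sum_congr rfl fun s _ => ?_
  by_cases hc : s.card = k
  · simp [hc]
  · simp [hc, Ne.symm hc]

lemma elemSym_neg {n : ℕ} (y : Fin n → R) {k : ℤ} (hk : k < 0) : elemSym y k = 0 := by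
  rw [elemSym, if_neg (by omega)]

lemma completeHom_neg {m : ℕ} (x : Fin m → R) {k : ℤ} (hk : k < 0) : completeHom x k = 0 := by
  rw [completeHom, if_neg (by omega)]

lemma elemSym_perm {n : ℕ} (y : Fin n → R) (τ : Equiv.Perm (Fin n)) (k : ℤ) :
    elemSym (y ∘ τ) k = elemSym y k := by
  rcases lt_or_ge k 0 with hk | hk
  · rw [elemSym_neg _ hk, elemSym_neg _ hk]
  · obtain ⟨K, rfl⟩ : ∃ K : ℕ, k = (K : ℤ) := ⟨k.toNat, (Int.toNat_of_nonneg hk).symm⟩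
    rw [elemSym_eq_coeff, elemSym_eq_coeff]
    congr 1
    exact Equiv.prod_comp τ (fun i => 1 + Polynomial.C (y i) * Polynomial.X)

lemma elemSym_gt {n : ℕ} (y : Fin n → R) {k : ℤ} (hk : (n : ℤ) < k) : elemSym y k = 0 := by
  rw [elemSym, if_pos (by omega)]
  rw [Finset.powersetCard_eq_empty.mpr (by simp; omega), Finset.sum_empty]

lemma elemSym_snoc {n : ℕ} (z : Fin n → R) (w : R) (k : ℤ) :
    elemSym (Fin.snoc z w) k = elemSym z k + w * elemSym z (k - 1) := by
  rcases lt_or_ge k 0 with hk | hk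
  · rw [elemSym_neg _ hk, elemSym_neg _ hk, elemSym_neg _ (by omega)]; ring
  obtain ⟨K, rfl⟩ : ∃ K : ℕ, k = (K : ℤ) := ⟨k.toNat, (Int.toNat_of_nonneg hk).symm⟩
  have hprod : (∏ i, (1 + Polynomial.C ((Fin.snoc z w : Fin (n + 1) → R) i) * Polynomial.X))
      = (∏ i, (1 + Polynomial.C (z i) * Polynomial.X)) * (1 + Polynomial.C w * Polynomial.X) := by
    rw [Fin.prod_univ_castSucc]
    simp [Fin.snoc_castSucc, Fin.snoc_last]
  rcases Nat.eq_zero_or_pos K with hK | hK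
  · subst hK
    rw [elemSym_eq_coeff, elemSym_eq_coeff, hprod]
    rw [show ((0:ℕ):ℤ) - 1 = (-1 : ℤ) by ring, elemSym_neg _ (by omega)]
    simp [Polynomial.mul_coeff_zero]
  · obtain ⟨K', rfl⟩ : ∃ K', K = K' + 1 := ⟨K - 1, by omega⟩
    rw [elemSym_eq_coeff, elemSym_eq_coeff, hprod,
      show ((K' + 1 : ℕ) : ℤ) - 1 = ((K' : ℕ) : ℤ) by push_cast; ring, elemSym_eq_coeff]
    set P := ∏ i, (1 + Polynomial.C (z i) * Polynomial.X) with hP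
    have : P * (1 + Polynomial.C w * Polynomial.X) = P + Polynomial.C w * (P * Polynomial.X) := by
      ring
    rw [this, Polynomial.coeff_add, Polynomial.coeff_C_mul, Polynomial.coeff_mul_X]

lemma superComplete_neg {m n : ℕ} (x : Fin m → R) (y : Fin n → R) {a : ℤ} (ha : a < 0) :
    superComplete x y a = 0 := by
  rw [superComplete]
  refine Finset.sum_eq_zero fun j _ => ?_
  rw [completeHom_neg _ (by omega)]
  ring

lemma superComplete_perm {m n : ℕ} (x : Fin m → R) (y : Fin n → R) (τ : Equiv.Perm (Fin n))
    (a : ℤ) : superComplete x (y ∘ τ) a = superComplete x y a := by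
  unfold superComplete
  exact Finset.sum_congr rfl fun j _ => by rw [elemSym_perm]

lemma superComplete_snoc {m n : ℕ} (x : Fin m → R) (z : Fin n → R) (w : R) (a : ℤ) :
    superComplete x (Fin.snoc z w) a = superComplete x z a - w * superComplete x z (a - 1) := by
  unfold superComplete
  have key : ∑ j ∈ Finset.range (n + 1 + 1),
      (-1 : R) ^ j * completeHom x (a - (j : ℤ)) * elemSym (Fin.snoc z w) (j : ℤ)
      = (∑ j ∈ Finset.range (n + 1 + 1),
          (-1 : R) ^ j * completeHom x (a - (j : ℤ)) * elemSym z (j : ℤ))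
        + ∑ j ∈ Finset.range (n + 1 + 1),
          (-1 : R) ^ j * completeHom x (a - (j : ℤ)) * (w * elemSym z ((j : ℤ) - 1)) := by
    rw [← Finset.sum_add_distrib]
    refine Finset.sum_congr rfl fun j _ => ?_
    rw [elemSym_snoc]
    ring
  rw [key]
  have e1 : (∑ j ∈ Finset.range (n + 1 + 1),
      (-1 : R) ^ j * completeHom x (a - (j : ℤ)) * elemSym z (j : ℤ))
      = ∑ j ∈ Finset.range (n + 1),
          (-1 : R) ^ j * completeHom x (a - (j : ℤ)) * elemSym z (j : ℤ) := by
    rw [Finset.sum_range_succ, elemSym_gt z (by push_cast; omega), mul_zero, add_zero]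
  have e2 : (∑ j ∈ Finset.range (n + 1 + 1),
      (-1 : R) ^ j * completeHom x (a - (j : ℤ)) * (w * elemSym z ((j : ℤ) - 1)))
      = -(w * ∑ j ∈ Finset.range (n + 1),
          (-1 : R) ^ j * completeHom x (a - 1 - (j : ℤ)) * elemSym z (j : ℤ)) := by
    rw [Finset.sum_range_succ' (fun j =>
      (-1 : R) ^ j * completeHom x (a - (j : ℤ)) * (w * elemSym z ((j : ℤ) - 1))) (n + 1)]
    have h0 : elemSym z (((0 : ℕ) : ℤ) - 1) = 0 := elemSym_neg _ (by norm_num)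
    rw [h0]
    have hterm : ∀ j : ℕ,
        (-1 : R) ^ (j + 1) * completeHom x (a - ((j + 1 : ℕ) : ℤ)) * (w * elemSym z (((j + 1 : ℕ) : ℤ) - 1))
        = -(w * ((-1 : R) ^ j * completeHom x (a - 1 - (j : ℤ)) * elemSym z (j : ℤ))) := by
      intro j
      rw [show a - ((j + 1 : ℕ) : ℤ) = a - 1 - (j : ℤ) by push_cast; ring,
        show ((j + 1 : ℕ) : ℤ) - 1 = (j : ℤ) by push_cast; ring]
      ring
    rw [Finset.sum_congr rfl fun j _ => hterm j]
    rw [Finset.sum_neg_distrib, ← Finset.mul_sum]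
    ring
  rw [e1, e2]
  ring

lemma superComplete_expand {m n : ℕ} (x : Fin m → R) (z : Fin n → R) (w : R) {N : ℕ} {a : ℤ}
    (ha : a ≤ (N : ℤ)) :
    superComplete x z a
      = ∑ r ∈ Finset.range (N + 1), w ^ r * superComplete x (Fin.snoc z w) (a - (r : ℤ)) := by
  have h1 : ∀ r : ℕ, w ^ r * superComplete x (Fin.snoc z w) (a - (r : ℤ))
      = w ^ r * superComplete x z (a - (r : ℤ))
        - w ^ (r + 1) * superComplete x z (a - ((r + 1 : ℕ) : ℤ)) := by
    intro r
    rw [superComplete_snoc, show a - (r : ℤ) - 1 = a - ((r + 1 : ℕ) : ℤ) by push_cast; ring]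
    ring
  rw [Finset.sum_congr rfl fun r _ => h1 r,
    Finset.sum_range_sub' (fun r => w ^ r * superComplete x z (a - (r : ℤ)))]
  have hneg : superComplete x z (a - ((N + 1 : ℕ) : ℤ)) = 0 :=
    superComplete_neg x z (by push_cast; omega)
  rw [hneg]
  simp

lemma superSchur_perm {m n L : ℕ} (x : Fin m → R) (y : Fin n → R) (τ : Equiv.Perm (Fin n))
    (lam : Fin L → ℕ) : superSchur x (y ∘ τ) lam = superSchur x y lam := by
  unfold superSchur
  congr 1
  ext i j
  exact superComplete_perm _ _ _ _

/-- determinant is additive in a column over a `Finset.range` sum with coefficients. -/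
lemma det_updateCol_range_sum {m : ℕ} (B : Matrix (Fin m) (Fin m) R) (j0 : Fin m) (N : ℕ)
    (c : ℕ → R) (f : ℕ → Fin m → R) :
    Matrix.det (B.updateCol j0 (fun i => ∑ r ∈ Finset.range N, c r * f r i))
      = ∑ r ∈ Finset.range N, c r * Matrix.det (B.updateCol j0 (f r)) := by
  induction N with
  | zero =>
    simp only [Finset.range_zero, Finset.sum_empty]
    refine Matrix.det_eq_zero_of_column_eq_zero j0 fun i => ?_
    simp [Matrix.updateCol_apply]
  | succ N ih =>
    have hfun : (fun i => ∑ r ∈ Finset.range (N + 1), c r * f r i)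
        = (fun i => ∑ r ∈ Finset.range N, c r * f r i) + (c N) • (f N) := by
      funext i
      simp [Finset.sum_range_succ, Pi.add_apply, Pi.smul_apply, smul_eq_mul]
    rw [hfun, Matrix.det_updateCol_add, ih, Matrix.det_updateCol_smul,
      Finset.sum_range_succ]

end Aux

section Main

open Finset Equiv

variable {R : Type*} [CommRing R]

/-- The auxiliary determinants `Ψ_r`. -/
noncomputable def auxPsi {m n : ℕ} (u : Fin m → R) (y : Fin (n + 1) → R) (lam : Fin m → ℕ)
    (j0 : Fin m) (r : ℕ) : R :=
  Matrix.det ((Matrix.of fun i j : Fin m =>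
      superComplete u y ((lam i : ℤ) + (j : ℤ) - (i : ℤ))).updateCol j0
    (fun i => superComplete u y ((lam i : ℤ) - (i : ℤ) - (r : ℤ))))

lemma auxPsi_perm {m n : ℕ} (u : Fin m → R) (y : Fin (n + 1) → R) (τ : Equiv.Perm (Fin (n + 1)))
    (lam : Fin m → ℕ) (j0 : Fin m) (r : ℕ) :
    auxPsi u (y ∘ τ) lam j0 r = auxPsi u y lam j0 r := by
  unfold auxPsi
  congr 1
  ext i j
  rw [Matrix.updateCol_apply, Matrix.updateCol_apply]
  split <;> simp [superComplete_perm]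

lemma auxPsi_zero {m n : ℕ} (u : Fin m → R) (y : Fin (n + 1) → R) (lam : Fin m → ℕ)
    (hm : 0 < m) :
    auxPsi u y lam ⟨0, hm⟩ 0 = superSchur u y lam := by
  unfold auxPsi superSchur
  congr 1
  have : (fun i => superComplete u y ((lam i : ℤ) - (i : ℤ) - ((0 : ℕ) : ℤ)))
      = fun i => (Matrix.of fun i j : Fin m =>
          superComplete u y ((lam i : ℤ) + (j : ℤ) - (i : ℤ))) i ⟨0, hm⟩ := by
    funext i
    simp only [Matrix.of_apply]
    congr 1
    simp
  rw [this, Matrix.updateCol_eq_self]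

/-- The key decomposition: the super Schur polynomial in the first `n` of `n+1` variables
is a combination of `Ψ_r` with powers of the last variable. -/
lemma schur_decomp {m n : ℕ} (u : Fin m → R) (y : Fin (n + 1) → R) (lam : Fin m → ℕ)
    (hm : 0 < m) (hlam : ∀ i, lam i ≤ n) :
    superSchur u (y ∘ Fin.castSucc) lam
      = ∑ r ∈ Finset.range (n + 1), (y (Fin.last n)) ^ r * auxPsi u y lam ⟨0, hm⟩ r := by
  set w : R := y (Fin.last n) with hw
  set z : Fin n → R := y ∘ Fin.castSucc with hz
  have hy : Fin.snoc z w = y := by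
    funext j
    refine Fin.lastCases ?_ ?_ j
    · simp [hw]
    · intro i
      simp [hz, Fin.snoc_castSucc]
  set B : Matrix (Fin m) (Fin m) R := Matrix.of fun i j =>
      superComplete u y ((lam i : ℤ) + (j : ℤ) - (i : ℤ)) with hB
  set M : Matrix (Fin m) (Fin m) R := Matrix.of fun i j =>
      superComplete u z ((lam i : ℤ) + (j : ℤ) - (i : ℤ)) with hM
  set U : Matrix (Fin m) (Fin m) R := Matrix.of fun k j =>
      if k = j then (1 : R) else if (k : ℕ) + 1 = (j : ℕ) then -w else 0 with hU
  have hUtri : U.BlockTriangular id := by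
    intro i j hij
    have hlt : (j : ℕ) < (i : ℕ) := hij
    simp only [hU, Matrix.of_apply]
    rw [if_neg (by intro hc; subst hc; omega), if_neg (by omega)]
  have hUdet : U.det = 1 := by
    rw [Matrix.det_of_upperTriangular hUtri]
    refine Finset.prod_eq_one fun i _ => ?_
    simp [hU]
  have hMU : M * U = B.updateCol ⟨0, hm⟩
      (fun i => superComplete u z ((lam i : ℤ) - (i : ℤ))) := by
    ext i j
    rw [Matrix.mul_apply]
    have hsplit : ∀ k : Fin m, M i k * U k j
        = (if k = j then M i k else 0)
          + (if (k : ℕ) + 1 = (j : ℕ) then (-w) * M i k else 0) := by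
      intro k
      simp only [hU, Matrix.of_apply]
      by_cases h1 : k = j
      · rw [if_pos h1, if_pos h1, if_neg (by subst h1; omega)]
        ring
      · rw [if_neg h1, if_neg h1]
        by_cases h2 : (k : ℕ) + 1 = (j : ℕ)
        · rw [if_pos h2, if_pos h2]
          ring
        · rw [if_neg h2, if_neg h2]
          ring
    rw [Finset.sum_congr rfl fun k _ => hsplit k, Finset.sum_add_distrib,
      Finset.sum_ite_eq' Finset.univ j (fun k => M i k), if_pos (Finset.mem_univ j)]
    rcases j with ⟨jv, hj⟩
    rcases Nat.eq_zero_or_pos jv with hjv | hjv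
    · subst hjv
      have h2 : (∑ k : Fin m, if (k : ℕ) + 1 = ((⟨0, hj⟩ : Fin m) : ℕ) then (-w) * M i k else 0)
          = 0 := Finset.sum_eq_zero fun k _ => by
        rw [if_neg (by simp)]
      rw [h2, add_zero, Matrix.updateCol_apply, if_pos rfl]
      simp only [hM, Matrix.of_apply]
      congr 1
    · obtain ⟨v, rfl⟩ : ∃ v, jv = v + 1 := ⟨jv - 1, by omega⟩
      have hv : v < m := by omega
      have h2 : (∑ k : Fin m, if (k : ℕ) + 1 = ((⟨v + 1, hj⟩ : Fin m) : ℕ) then (-w) * M i k else 0)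
          = (-w) * M i ⟨v, hv⟩ := by
        rw [Finset.sum_eq_single (⟨v, hv⟩ : Fin m)]
        · rw [if_pos rfl]
        · intro k _ hk
          rw [if_neg]
          intro hc
          exact hk (Fin.ext (by simpa using hc))
        · intro h
          exact absurd (Finset.mem_univ _) h
      rw [h2, Matrix.updateCol_apply, if_neg (by
        intro hc
        have : v + 1 = 0 := by simpa [Fin.ext_iff] using hc
        omega)]
      simp only [hM, hB, Matrix.of_apply]
      have harg : (lam i : ℤ) + ((⟨v, hv⟩ : Fin m) : ℤ) - (i : ℤ)
          = ((lam i : ℤ) + ((⟨v + 1, hj⟩ : Fin m) : ℤ) - (i : ℤ)) - 1 := by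
        simp
        ring
      rw [harg, ← hy, superComplete_snoc]
      ring
  have hcol : (fun i => superComplete u z ((lam i : ℤ) - (i : ℤ)))
      = fun i => ∑ r ∈ Finset.range (n + 1),
          w ^ r * superComplete u y ((lam i : ℤ) - (i : ℤ) - (r : ℤ)) := by
    funext i
    have hle : (lam i : ℤ) - (i : ℤ) ≤ (n : ℤ) := by
      have := hlam i
      omega
    rw [superComplete_expand u z w hle, hy]
  calc superSchur u z lam = M.det := rfl
    _ = (M * U).det := by rw [Matrix.det_mul, hUdet, mul_one]
    _ = (B.updateCol ⟨0, hm⟩ (fun i => superComplete u z ((lam i : ℤ) - (i : ℤ)))).det := by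
        rw [hMU]
    _ = (B.updateCol ⟨0, hm⟩ (fun i => ∑ r ∈ Finset.range (n + 1),
          w ^ r * superComplete u y ((lam i : ℤ) - (i : ℤ) - (r : ℤ)))).det := by rw [hcol]
    _ = ∑ r ∈ Finset.range (n + 1), w ^ r * (B.updateCol ⟨0, hm⟩
          (fun i => superComplete u y ((lam i : ℤ) - (i : ℤ) - (r : ℤ)))).det :=
        det_updateCol_range_sum B ⟨0, hm⟩ (n + 1) (fun r => w ^ r)
          (fun r i => superComplete u y ((lam i : ℤ) - (i : ℤ) - (r : ℤ)))
    _ = ∑ r ∈ Finset.range (n + 1), (y (Fin.last n)) ^ r * auxPsi u y lam ⟨0, hm⟩ r := rfl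

lemma alt_vanish {n : ℕ} (y : Fin (n + 1) → R) {r : ℕ} (h1 : 1 ≤ r) (h2 : r ≤ n) :
    ∑ τ : Equiv.Perm (Fin (n + 1)), ((Equiv.Perm.sign τ : ℤ) : R)
      * ∏ j, y (τ j) ^ (if j = Fin.last n then r else n - (j : ℕ)) = 0 := by
  set M : Matrix (Fin (n + 1)) (Fin (n + 1)) R := Matrix.of fun i j =>
      y i ^ (if j = Fin.last n then r else n - (j : ℕ)) with hMdef
  have h : (∑ τ : Equiv.Perm (Fin (n + 1)), ((Equiv.Perm.sign τ : ℤ) : R)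
      * ∏ j, y (τ j) ^ (if j = Fin.last n then r else n - (j : ℕ))) = M.det :=
    (Matrix.det_apply' M).symm
  rw [h]
  have hne : (⟨n - r, by omega⟩ : Fin (n + 1)) ≠ Fin.last n := by
    intro hc
    have : n - r = n := by simpa [Fin.ext_iff, Fin.last] using hc
    omega
  refine Matrix.det_zero_of_column_eq hne fun k => ?_
  have hcol : ∀ j : Fin (n + 1), M k j
      = y k ^ (if j = Fin.last n then r else n - (j : ℕ)) := fun j => rfl
  rw [hcol, hcol, if_neg hne, if_pos rfl]
  congr 1
  show n - (n - r) = r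
  omega

lemma inner_eq {m n : ℕ} (hm : 0 < m) (u : Fin m → R) (y : Fin (n + 1) → R) (lam : Fin m → ℕ)
    (hlam : ∀ i, lam i ≤ n) :
    (∑ τ : Equiv.Perm (Fin (n + 1)), ((Equiv.Perm.sign τ : ℤ) : R)
        * (superSchur u ((y ∘ τ) ∘ Fin.castSucc) lam * ∏ j, y (τ j) ^ (n - (j : ℕ))))
    = ∑ τ : Equiv.Perm (Fin (n + 1)), ((Equiv.Perm.sign τ : ℤ) : R)
        * (superSchur u (y ∘ τ) lam * ∏ j, y (τ j) ^ (n - (j : ℕ))) := by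
  have hdecomp : ∀ τ : Equiv.Perm (Fin (n + 1)),
      superSchur u ((y ∘ τ) ∘ Fin.castSucc) lam
        = ∑ r ∈ Finset.range (n + 1), (y (τ (Fin.last n))) ^ r * auxPsi u y lam ⟨0, hm⟩ r := by
    intro τ
    rw [schur_decomp u (y ∘ τ) lam hm hlam]
    refine Finset.sum_congr rfl fun r _ => ?_
    rw [auxPsi_perm]
    rfl
  have hpowprod : ∀ (τ : Equiv.Perm (Fin (n + 1))) (r : ℕ),
      (y (τ (Fin.last n))) ^ r * ∏ j, y (τ j) ^ (n - (j : ℕ))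
        = ∏ j, y (τ j) ^ (if j = Fin.last n then r else n - (j : ℕ)) := by
    intro τ r
    rw [Fin.prod_univ_castSucc (f := fun j => y (τ j) ^ (n - (j : ℕ))),
      Fin.prod_univ_castSucc (f := fun j => y (τ j) ^ (if j = Fin.last n then r else n - (j : ℕ)))]
    have h1 : ∀ j : Fin n,
        y (τ (Fin.castSucc j)) ^ (if Fin.castSucc j = Fin.last n then r
            else n - ((Fin.castSucc j : Fin (n + 1)) : ℕ))
          = y (τ (Fin.castSucc j)) ^ (n - (j : ℕ)) := fun j => by
      rw [if_neg (Fin.castSucc_lt_last j).ne, Fin.coe_castSucc]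
    rw [Finset.prod_congr rfl fun j _ => h1 j, if_pos rfl, Fin.val_last, Nat.sub_self, pow_zero,
      mul_one]
    simp only [Fin.coe_castSucc]
    ring
  calc (∑ τ : Equiv.Perm (Fin (n + 1)), ((Equiv.Perm.sign τ : ℤ) : R)
        * (superSchur u ((y ∘ τ) ∘ Fin.castSucc) lam * ∏ j, y (τ j) ^ (n - (j : ℕ))))
      = ∑ τ : Equiv.Perm (Fin (n + 1)), ∑ r ∈ Finset.range (n + 1),
          auxPsi u y lam ⟨0, hm⟩ r * (((Equiv.Perm.sign τ : ℤ) : R)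
            * ∏ j, y (τ j) ^ (if j = Fin.last n then r else n - (j : ℕ))) := by
        refine Finset.sum_congr rfl fun τ _ => ?_
        rw [hdecomp τ, Finset.sum_mul, Finset.mul_sum]
        refine Finset.sum_congr rfl fun r _ => ?_
        rw [← hpowprod τ r]
        ring
    _ = ∑ r ∈ Finset.range (n + 1), auxPsi u y lam ⟨0, hm⟩ r
          * ∑ τ : Equiv.Perm (Fin (n + 1)), ((Equiv.Perm.sign τ : ℤ) : R)
            * ∏ j, y (τ j) ^ (if j = Fin.last n then r else n - (j : ℕ)) := by
        rw [Finset.sum_comm]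
        exact Finset.sum_congr rfl fun r _ => by rw [Finset.mul_sum]
    _ = auxPsi u y lam ⟨0, hm⟩ 0
          * ∑ τ : Equiv.Perm (Fin (n + 1)), ((Equiv.Perm.sign τ : ℤ) : R)
            * ∏ j, y (τ j) ^ (if j = Fin.last n then 0 else n - (j : ℕ)) := by
        refine Finset.sum_eq_single_of_mem 0 (Finset.mem_range.mpr (Nat.succ_pos n))
          fun r hr hr0 => ?_
        have hr1 : 1 ≤ r := by omega
        have hr2 : r ≤ n := by
          have := Finset.mem_range.mp hr
          omega
        rw [alt_vanish y hr1 hr2, mul_zero]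
    _ = ∑ τ : Equiv.Perm (Fin (n + 1)), ((Equiv.Perm.sign τ : ℤ) : R)
          * (superSchur u (y ∘ τ) lam * ∏ j, y (τ j) ^ (n - (j : ℕ))) := by
        rw [auxPsi_zero u y lam hm, Finset.mul_sum]
        refine Finset.sum_congr rfl fun τ _ => ?_
        rw [superSchur_perm u y τ lam]
        have he0 : (∏ j, y (τ j) ^ (if j = Fin.last n then 0 else n - (j : ℕ)))
            = ∏ j, y (τ j) ^ (n - (j : ℕ)) := by
          refine Finset.prod_congr rfl fun j _ => ?_
          by_cases hj : j = Fin.last n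
          · subst hj
            rw [if_pos rfl, Fin.val_last, Nat.sub_self]
          · rw [if_neg hj]
        rw [he0]
        ring

end Main

theorem statement11 {R : Type*} [CommRing R] (m n : ℕ) (x : Fin m → R)
    (y : Fin (n + 1) → R) (lam : Fin m → ℕ) (hanti : Antitone lam)
    (hlam : ∀ i, lam i ≤ n) :
    (∑ σ : Equiv.Perm (Fin m), ∑ τ : Equiv.Perm (Fin (n + 1)),
      (((Equiv.Perm.sign σ : ℤ) * (Equiv.Perm.sign τ : ℤ) : ℤ) : R) *
        (superSchur (x ∘ σ) (y ∘ τ) lam *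
          (∏ i, x (σ i) ^ (m - 1 - (i : ℕ))) * ∏ j, y (τ j) ^ (n - (j : ℕ)))) =
    (∑ σ : Equiv.Perm (Fin m), ∑ τ : Equiv.Perm (Fin (n + 1)),
      (((Equiv.Perm.sign σ : ℤ) * (Equiv.Perm.sign τ : ℤ) : ℤ) : R) *
        (superSchur (x ∘ σ) ((y ∘ τ) ∘ Fin.castSucc) lam *
          (∏ i, x (σ i) ^ (m - 1 - (i : ℕ))) * ∏ j, y (τ j) ^ (n - (j : ℕ)))) := by
  rcases Nat.eq_zero_or_pos m with hm | hm
  · subst hm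
    simp only [superSchur, Matrix.det_fin_zero]
  · refine Finset.sum_congr rfl fun σ _ => ?_
    calc (∑ τ : Equiv.Perm (Fin (n + 1)),
        (((Equiv.Perm.sign σ : ℤ) * (Equiv.Perm.sign τ : ℤ) : ℤ) : R) *
          (superSchur (x ∘ σ) (y ∘ τ) lam *
            (∏ i, x (σ i) ^ (m - 1 - (i : ℕ))) * ∏ j, y (τ j) ^ (n - (j : ℕ))))
        = ((Equiv.Perm.sign σ : ℤ) : R) * (∏ i, x (σ i) ^ (m - 1 - (i : ℕ)))
            * ∑ τ : Equiv.Perm (Fin (n + 1)), ((Equiv.Perm.sign τ : ℤ) : R)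
              * (superSchur (x ∘ σ) (y ∘ τ) lam * ∏ j, y (τ j) ^ (n - (j : ℕ))) := by
          rw [Finset.mul_sum]
          refine Finset.sum_congr rfl fun τ _ => ?_
          push_cast
          ring
      _ = ((Equiv.Perm.sign σ : ℤ) : R) * (∏ i, x (σ i) ^ (m - 1 - (i : ℕ)))
            * ∑ τ : Equiv.Perm (Fin (n + 1)), ((Equiv.Perm.sign τ : ℤ) : R)
              * (superSchur (x ∘ σ) ((y ∘ τ) ∘ Fin.castSucc) lam
                  * ∏ j, y (τ j) ^ (n - (j : ℕ))) := by
          rw [inner_eq hm (x ∘ σ) y lam hlam]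
      _ = ∑ τ : Equiv.Perm (Fin (n + 1)),
          (((Equiv.Perm.sign σ : ℤ) * (Equiv.Perm.sign τ : ℤ) : ℤ) : R) *
            (superSchur (x ∘ σ) ((y ∘ τ) ∘ Fin.castSucc) lam *
              (∏ i, x (σ i) ^ (m - 1 - (i : ℕ))) * ∏ j, y (τ j) ^ (n - (j : ℕ))) := by
          rw [Finset.mul_sum]
          refine Finset.sum_congr rfl fun τ _ => ?_
          push_cast
          ring
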